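/- Let E and F be Banach lattices. A continuous operator T : E → F is weak M-weakly compact if and only if its adjoint T' : F' → E' is weak* L-weakly compact. -/

import Mathlib

open Filter Topology Bornology

/-- A sequence in a normed lattice is unbounded-norm (un-) null if `‖ |xₙ| ⊓ u ‖ → 0`
for every positive `u`. -/
def UnNullSeq {G : Type*} [NormedAddCommGroup G] [Lattice G] [HasSolidNorm G] [IsOrderedAddMonoid G] (x : ℕ → G) : Prop :=
  ∀ u : G, 0 ≤ u → Tendsto (fun n => ‖|x n| ⊓ u‖) atTop (𝓝 0)

/-- A pairwise disjoint sequence. -/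
def DisjointSeq {G : Type*} [NormedAddCommGroup G] [Lattice G] [HasSolidNorm G] [IsOrderedAddMonoid G] (x : ℕ → G) : Prop :=
  Pairwise fun n m => |x n| ⊓ |x m| = 0

/-- A norm bounded sequence. -/
def NormBddSeq {G : Type*} [NormedAddCommGroup G] [Lattice G] [HasSolidNorm G] [IsOrderedAddMonoid G] (x : ℕ → G) : Prop :=
  ∃ C : ℝ, ∀ n, ‖x n‖ ≤ C

/-- The solid hull of a set. -/
def SolidHull {G : Type*} [NormedAddCommGroup G] [Lattice G] [HasSolidNorm G] [IsOrderedAddMonoid G] (A : Set G) : Set G :=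
  {x | ∃ y ∈ A, |x| ≤ |y|}

/-- A bounded set is L-weakly compact if every disjoint sequence in its solid hull is
norm null. -/
def LWCSet {G : Type*} [NormedAddCommGroup G] [Lattice G] [HasSolidNorm G] [IsOrderedAddMonoid G] (A : Set G) : Prop :=
  IsBounded A ∧ ∀ x : ℕ → G, (∀ n, x n ∈ SolidHull A) → DisjointSeq x →
    Tendsto (fun n => ‖x n‖) atTop (𝓝 0)

/-- The norm is order continuous: every net decreasing to `0` is norm null. -/
def OrderContNorm (G : Type*) [NormedAddCommGroup G] [Lattice G] [HasSolidNorm G] [IsOrderedAddMonoid G] : Prop :=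
  ∀ (ι : Type) [SemilatticeSup ι] [Nonempty ι] (x : ι → G),
    Antitone x → IsGLB (Set.range x) 0 → Tendsto (fun i => ‖x i‖) atTop (𝓝 0)

/-- Dedekind σ-completeness: every bounded-above increasing sequence has a supremum. -/
def DedekindSigmaComplete (G : Type*) [NormedAddCommGroup G] [Lattice G] [HasSolidNorm G] [IsOrderedAddMonoid G] : Prop :=
  ∀ x : ℕ → G, Monotone x → (∃ b, ∀ n, x n ≤ b) → ∃ s, IsLUB (Set.range x) s

/-- An atom of a Banach lattice. -/
def IsLatticeAtom {G : Type*} [NormedAddCommGroup G] [Lattice G] [HasSolidNorm G] [IsOrderedAddMonoid G] [NormedSpace ℝ G] (a : G) : Prop :=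
  0 < a ∧ ∀ x : G, 0 ≤ x → x ≤ a → ∃ c : ℝ, x = c • a

/-- An atomic Banach lattice: every nonzero positive element dominates an atom. -/
def AtomicLattice (G : Type*) [NormedAddCommGroup G] [Lattice G] [HasSolidNorm G] [IsOrderedAddMonoid G] [NormedSpace ℝ G] : Prop :=
  ∀ x : G, 0 < x → ∃ a, IsLatticeAtom a ∧ a ≤ x

/-- A realization of the Banach lattice `E'` as the topological dual of the Banach lattice
`E`: a linear isometric isomorphism onto `NormedSpace.Dual ℝ E` that identifies the order. -/
structure DualPairing (E E' : Type*) [NormedAddCommGroup E] [Lattice E] [HasSolidNorm E] [IsOrderedAddMonoid E] [NormedSpace ℝ E]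
    [NormedAddCommGroup E'] [Lattice E'] [HasSolidNorm E'] [IsOrderedAddMonoid E'] [NormedSpace ℝ E'] where
  toDual : E' ≃ₗᵢ[ℝ] StrongDual ℝ E
  pos_iff : ∀ f : E', 0 ≤ f ↔ ∀ x : E, 0 ≤ x → 0 ≤ toDual f x

section Pairing

variable {E E' : Type*} [NormedAddCommGroup E] [Lattice E] [HasSolidNorm E] [IsOrderedAddMonoid E] [NormedSpace ℝ E]
  [NormedAddCommGroup E'] [Lattice E'] [HasSolidNorm E'] [IsOrderedAddMonoid E'] [NormedSpace ℝ E']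

/-- A bounded set `A ⊆ E` is weak L-weakly compact if `sup_{x ∈ A} |x'ₙ(x)| → 0` for every
norm bounded un-null sequence `(x'ₙ)` in the dual `E'`. -/
def WeakLWCSet (P : DualPairing E E') (A : Set E) : Prop :=
  IsBounded A ∧ ∀ f : ℕ → E', NormBddSeq f → UnNullSeq f →
    Tendsto (fun n => ⨆ x ∈ A, |P.toDual (f n) x|) atTop (𝓝 0)

/-- A bounded set `B ⊆ E'` is weak* L-weakly compact if `sup_{x' ∈ B} |x'(xₙ)| → 0` for every
norm bounded un-null sequence `(xₙ)` in `E`. -/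
def WeakStarLWCSet (P : DualPairing E E') (B : Set E') : Prop :=
  IsBounded B ∧ ∀ x : ℕ → E, NormBddSeq x → UnNullSeq x →
    Tendsto (fun n => ⨆ f ∈ B, |P.toDual f (x n)|) atTop (𝓝 0)

end Pairing

section Op

variable {E F X : Type*} [NormedAddCommGroup E] [Lattice E] [HasSolidNorm E] [IsOrderedAddMonoid E] [NormedSpace ℝ E]
  [NormedAddCommGroup X] [NormedSpace ℝ X]

/-- `T : E → X` is M-weakly compact if `‖Txₙ‖ → 0` for every norm bounded disjoint
sequence in `E`. -/
def MWeaklyCompact (T : E →L[ℝ] X) : Prop :=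
  ∀ x : ℕ → E, NormBddSeq x → DisjointSeq x → Tendsto (fun n => ‖T (x n)‖) atTop (𝓝 0)

/-- `T : E → X` is weak M-weakly compact if `‖Txₙ‖ → 0` for every un-null sequence in the
closed unit ball of `E`. -/
def WeakMWeaklyCompact (T : E →L[ℝ] X) : Prop :=
  ∀ x : ℕ → E, (∀ n, ‖x n‖ ≤ 1) → UnNullSeq x → Tendsto (fun n => ‖T (x n)‖) atTop (𝓝 0)

/-- `T : X → E` is L-weakly compact if the image of the closed unit ball is an
L-weakly compact set. -/
def LWCOperator (T : X →L[ℝ] E) : Prop :=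
  LWCSet (T '' Metric.closedBall 0 1)

/-- `T : X → E` is weak L-weakly compact if `sup_{x ∈ B_X} |fₙ(Tx)| → 0` for every norm
bounded un-null sequence `(fₙ)` in `E'`. -/
def WeakLWCOperator {E' : Type*} [NormedAddCommGroup E'] [Lattice E'] [HasSolidNorm E'] [IsOrderedAddMonoid E'] [NormedSpace ℝ E']
    (P : DualPairing E E') (T : X →L[ℝ] E) : Prop :=
  ∀ f : ℕ → E', NormBddSeq f → UnNullSeq f →
    Tendsto (fun n => ⨆ x ∈ Metric.closedBall (0 : X) 1, |P.toDual (f n) (T x)|) atTop (𝓝 0)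

/-- `T : X → E'` is weak* L-weakly compact if its image of the unit ball is a weak*
L-weakly compact set. -/
def WeakStarLWCOperator {E' : Type*} [NormedAddCommGroup E'] [Lattice E'] [HasSolidNorm E'] [IsOrderedAddMonoid E'] [NormedSpace ℝ E']
    (P : DualPairing E E') (T : X →L[ℝ] E') : Prop :=
  ∀ x : ℕ → E, NormBddSeq x → UnNullSeq x →
    Tendsto (fun n => ⨆ y ∈ Metric.closedBall (0 : X) 1, |P.toDual (T y) (x n)|) atTop (𝓝 0)

/-- A positive operator. -/
def PositiveOp {F : Type*} [NormedAddCommGroup F] [Lattice F] [HasSolidNorm F] [IsOrderedAddMonoid F] [NormedSpace ℝ F] (T : E →L[ℝ] F) : Prop :=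
  ∀ x : E, 0 ≤ x → 0 ≤ T x

end Op

/-- Membership in `G^a`, the maximal ideal on which the induced norm is order continuous:
`x ∈ G^a` iff every disjoint sequence in `[0, |x|]` is norm null. -/
def InOrderContPart {G : Type*} [NormedAddCommGroup G] [Lattice G] [HasSolidNorm G] [IsOrderedAddMonoid G] (x : G) : Prop :=
  ∀ y : ℕ → G, (∀ n, 0 ≤ y n ∧ y n ≤ |x|) → DisjointSeq y →
    Tendsto (fun n => ‖y n‖) atTop (𝓝 0)


section SmulOrder
variable {G : Type*} [NormedAddCommGroup G] [Lattice G] [HasSolidNorm G] [IsOrderedAddMonoid G] [NormedSpace ℝ G]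

omit [NormedSpace ℝ G] in
lemma my_inf_add_le {a b c : G} (hab : 0 ≤ a ⊓ b) (hc : 0 ≤ c) :
    a ⊓ (b + c) ≤ a ⊓ b + c := by
  set d := a ⊓ (b + c) with hd
  have h1 : d - c ≤ a := sub_le_iff_le_add.2 (le_trans inf_le_left (le_add_of_nonneg_right hc))
  have h2 : d - c ≤ b := sub_le_iff_le_add.2 inf_le_right
  have h3 : (d - c) ⊔ 0 ≤ a ⊓ b := sup_le (le_inf h1 h2) hab
  calc d = (d - c) + c := by abel
    _ ≤ (d - c) ⊔ 0 + c := add_le_add_left le_sup_left c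
    _ ≤ a ⊓ b + c := add_le_add_left h3 c

omit [NormedSpace ℝ G] in
lemma my_inf_nsmul_zero {a b : G} (ha : 0 ≤ a) (hb : 0 ≤ b) (hab : a ⊓ b = 0) (n : ℕ) :
    a ⊓ (n • b) = 0 := by
  induction n with
  | zero => simp [zero_nsmul, inf_eq_right.mpr ha]
  | succ k ih =>
      have h := my_inf_add_le (a := a) (b := k • b) (c := b) (le_of_eq ih.symm) hb
      have hle : a ⊓ ((k+1) • b) ≤ b := by
        rw [add_smul, one_smul]
        simpa [ih] using h
      have hle2 : a ⊓ ((k+1) • b) ≤ a ⊓ b := le_inf inf_le_left hle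
      exact le_antisymm (hab ▸ hle2) (le_inf ha (nsmul_nonneg hb _))

omit [NormedSpace ℝ G] in
lemma my_nonneg_of_nsmul {y : G} {n : ℕ} (hn : n ≠ 0) (h : 0 ≤ n • y) : 0 ≤ y := by
  have hd : y⁺ ⊓ y⁻ = 0 := posPart_inf_negPart_eq_zero y
  have hnd : (n • y⁺) ⊓ (n • y⁻) = 0 := by
    have h1 : y⁺ ⊓ (n • y⁻) = 0 := my_inf_nsmul_zero (posPart_nonneg _) (negPart_nonneg _) hd n
    have h2 : (n • y⁻) ⊓ y⁺ = 0 := by rwa [inf_comm] at h1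
    have h3 := my_inf_nsmul_zero (nsmul_nonneg (negPart_nonneg _) n) (posPart_nonneg _) h2 n
    rwa [inf_comm] at h3
  have hy : n • y = n • y⁺ - n • y⁻ := by rw [← smul_sub, posPart_sub_negPart]
  have hle : n • y⁻ ≤ n • y⁺ := by rw [hy, sub_nonneg] at h; exact h
  have hz : n • y⁻ = 0 := by rw [← hnd, inf_eq_right.mpr hle]
  obtain ⟨k, rfl⟩ := Nat.exists_eq_succ_of_ne_zero hn
  have hyn : y⁻ ≤ (k+1) • y⁻ := by
    rw [add_smul, one_smul]
    exact le_add_of_nonneg_left (nsmul_nonneg (negPart_nonneg _) k)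
  have hz2 : y⁻ = 0 := le_antisymm (hz ▸ hyn) (negPart_nonneg _)
  exact negPart_eq_zero.mp hz2

lemma my_smul_nonneg {c : ℝ} (hc : 0 ≤ c) {x : G} (hx : 0 ≤ x) : 0 ≤ c • x := by
  -- first for rationals
  have hrat : ∀ q : ℚ, 0 ≤ q → 0 ≤ (q : ℝ) • x := by
    intro q hq
    have hden : (q.den : ℝ) * (q : ℝ) = (q.num : ℝ) := by
      rw [Rat.cast_def]
      field_simp
    have h1 : q.den • ((q : ℝ) • x) = (q.num.toNat : ℕ) • x := by
      rw [← Nat.cast_smul_eq_nsmul ℝ, ← Nat.cast_smul_eq_nsmul ℝ, smul_smul, hden]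
      congr 1
      exact_mod_cast (Int.toNat_of_nonneg (Rat.num_nonneg.mpr hq)).symm
    have h2 : 0 ≤ q.den • ((q : ℝ) • x) := h1 ▸ nsmul_nonneg hx _
    exact my_nonneg_of_nsmul q.den_ne_zero h2
  -- choose rationals approaching c from above
  have hq : ∀ n : ℕ, ∃ q : ℚ, c < q ∧ (q : ℝ) < c + 1 / (n + 1) := by
    intro n
    exact exists_rat_btwn (by
      have h01 : (0:ℝ) < 1 / (n + 1) := by positivity
      linarith)
  choose q hq1 hq2 using hq
  have htend : Tendsto (fun n : ℕ => ((q n : ℝ))) atTop (𝓝 c) := by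
    have h0 : Tendsto (fun n : ℕ => c + 1 / (n + 1 : ℝ)) atTop (𝓝 c) := by
      have := tendsto_one_div_add_atTop_nhds_zero_nat (𝕜 := ℝ)
      simpa using tendsto_const_nhds.add this
    exact tendsto_of_tendsto_of_tendsto_of_le_of_le tendsto_const_nhds h0
      (fun n => (hq1 n).le) (fun n => (hq2 n).le)
  have htend2 : Tendsto (fun n : ℕ => (q n : ℝ) • x) atTop (𝓝 (c • x)) :=
    htend.smul_const x
  have hcl : IsClosed {y : G | 0 ≤ y} := isClosed_le continuous_const continuous_id
  exact hcl.mem_of_tendsto htend2 (Eventually.of_forall fun n =>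
    hrat (q n) (by exact_mod_cast (hc.trans (hq1 n).le)))

end SmulOrder

section SmulOrder2
variable {G : Type*} [NormedAddCommGroup G] [Lattice G] [HasSolidNorm G] [IsOrderedAddMonoid G] [NormedSpace ℝ G]

lemma my_smul_mono {c : ℝ} (hc : 0 ≤ c) {a b : G} (hab : a ≤ b) : c • a ≤ c • b := by
  have h := my_smul_nonneg hc (sub_nonneg.mpr hab)
  rw [smul_sub] at h
  exact sub_nonneg.mp h

lemma my_smul_inf {c : ℝ} (hc : 0 < c) (a b : G) : c • (a ⊓ b) = (c • a) ⊓ (c • b) := by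
  refine le_antisymm (le_inf (my_smul_mono hc.le inf_le_left) (my_smul_mono hc.le inf_le_right)) ?_
  have h1 : c⁻¹ • ((c • a) ⊓ (c • b)) ≤ a ⊓ b := by
    refine le_inf ?_ ?_
    · have := my_smul_mono (inv_nonneg.mpr hc.le) (inf_le_left (a := c • a) (b := c • b))
      rwa [smul_smul, inv_mul_cancel₀ hc.ne', one_smul] at this
    · have := my_smul_mono (inv_nonneg.mpr hc.le) (inf_le_right (a := c • a) (b := c • b))
      rwa [smul_smul, inv_mul_cancel₀ hc.ne', one_smul] at this
  have h2 := my_smul_mono hc.le h1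
  rwa [smul_smul, mul_inv_cancel₀ hc.ne', one_smul] at h2

lemma my_smul_sup {c : ℝ} (hc : 0 < c) (a b : G) : c • (a ⊔ b) = (c • a) ⊔ (c • b) := by
  refine le_antisymm ?_ (sup_le (my_smul_mono hc.le le_sup_left) (my_smul_mono hc.le le_sup_right))
  have h1 : a ⊔ b ≤ c⁻¹ • ((c • a) ⊔ (c • b)) := by
    refine sup_le ?_ ?_
    · have := my_smul_mono (inv_nonneg.mpr hc.le) (le_sup_left (a := c • a) (b := c • b))
      rwa [smul_smul, inv_mul_cancel₀ hc.ne', one_smul] at this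
    · have := my_smul_mono (inv_nonneg.mpr hc.le) (le_sup_right (a := c • a) (b := c • b))
      rwa [smul_smul, inv_mul_cancel₀ hc.ne', one_smul] at this
  have h2 := my_smul_mono hc.le h1
  rwa [smul_smul, mul_inv_cancel₀ hc.ne', one_smul] at h2

lemma my_abs_smul {c : ℝ} (hc : 0 < c) (x : G) : |c • x| = c • |x| := by
  show (c • x) ⊔ -(c • x) = c • (x ⊔ -x)
  rw [my_smul_sup hc, smul_neg]

end SmulOrder2

lemma my_unnull_smul {G : Type*} [NormedAddCommGroup G] [Lattice G] [HasSolidNorm G] [IsOrderedAddMonoid G] [NormedSpace ℝ G]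
    {c : ℝ} (hc : 0 < c) {x : ℕ → G} (hx : UnNullSeq x) :
    UnNullSeq (fun n => c • x n) := by
  intro u hu
  have hkey : ∀ n, |c • x n| ⊓ u = c • (|x n| ⊓ c⁻¹ • u) := by
    intro n
    rw [my_smul_inf hc, my_abs_smul hc, smul_smul, mul_inv_cancel₀ hc.ne', one_smul]
  have h0 := hx (c⁻¹ • u) (my_smul_nonneg (inv_nonneg.mpr hc.le) hu)
  have h1 : Tendsto (fun n => c * ‖|x n| ⊓ c⁻¹ • u‖) atTop (𝓝 (c * 0)) := h0.const_mul c
  rw [mul_zero] at h1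
  refine h1.congr fun n => ?_
  rw [hkey n, norm_smul, Real.norm_eq_abs, abs_of_pos hc]

lemma my_dual_ball_sup {F F' : Type*} [NormedAddCommGroup F] [Lattice F] [HasSolidNorm F] [IsOrderedAddMonoid F] [NormedSpace ℝ F]
    [CompleteSpace F] [NormedAddCommGroup F'] [Lattice F'] [HasSolidNorm F'] [IsOrderedAddMonoid F'] [NormedSpace ℝ F']
    (Q : DualPairing F F') (z : F) :
    (⨆ y ∈ Metric.closedBall (0 : F') 1, |Q.toDual y z|) = ‖z‖ := by
  have hub : ∀ y : F', (⨆ _ : y ∈ Metric.closedBall (0 : F') 1, |Q.toDual y z|) ≤ ‖z‖ := by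
    intro y
    refine Real.iSup_le (fun hy => ?_) (norm_nonneg z)
    have h1 : ‖Q.toDual y‖ ≤ 1 := by
      rw [Q.toDual.norm_map]
      exact mem_closedBall_zero_iff.mp hy
    calc |Q.toDual y z| = ‖Q.toDual y z‖ := (Real.norm_eq_abs _).symm
      _ ≤ ‖Q.toDual y‖ * ‖z‖ := (Q.toDual y).le_opNorm z
      _ ≤ 1 * ‖z‖ := mul_le_mul_of_nonneg_right h1 (norm_nonneg z)
      _ = ‖z‖ := one_mul _
  refine le_antisymm (Real.iSup_le hub (norm_nonneg z)) ?_
  by_cases hz : z = 0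
  · subst hz
    rw [norm_zero]
    exact Real.iSup_nonneg fun y : F' => Real.iSup_nonneg fun _ => abs_nonneg (Q.toDual y 0)
  · obtain ⟨g, hg1, hg2⟩ := exists_dual_vector ℝ z (norm_ne_zero_iff.mpr hz)
    set y : F' := Q.toDual.symm g with hy
    have hyB : y ∈ Metric.closedBall (0 : F') 1 := by
      rw [mem_closedBall_zero_iff, hy, Q.toDual.symm.norm_map, hg1]
    have hval : |Q.toDual y z| = ‖z‖ := by
      rw [hy, Q.toDual.apply_symm_apply, hg2]
      exact abs_of_nonneg (norm_nonneg z)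
    have hbdd : BddAbove (Set.range fun y : F' =>
        ⨆ _ : y ∈ Metric.closedBall (0 : F') 1, |Q.toDual y z|) := by
      refine ⟨‖z‖, ?_⟩
      rintro _ ⟨y', rfl⟩
      exact hub y'
    calc ‖z‖ = |Q.toDual y z| := hval.symm
      _ = ⨆ _ : y ∈ Metric.closedBall (0 : F') 1, |Q.toDual y z| := (ciSup_pos (f := fun _ => |Q.toDual y z|) hyB).symm
      _ ≤ _ := le_ciSup hbdd y

/-- `T : E → F` is weak M-weakly compact iff its adjoint `T' : F' → E'` is weak* L-weakly
compact. -/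
theorem stmt11 {E : Type*} [NormedAddCommGroup E] [Lattice E] [HasSolidNorm E] [IsOrderedAddMonoid E] [NormedSpace ℝ E] [CompleteSpace E] {E' : Type*} [NormedAddCommGroup E'] [Lattice E'] [HasSolidNorm E'] [IsOrderedAddMonoid E'] [NormedSpace ℝ E'] [CompleteSpace E'] {F : Type*} [NormedAddCommGroup F] [Lattice F] [HasSolidNorm F] [IsOrderedAddMonoid F] [NormedSpace ℝ F] [CompleteSpace F] {F' : Type*} [NormedAddCommGroup F'] [Lattice F'] [HasSolidNorm F'] [IsOrderedAddMonoid F'] [NormedSpace ℝ F'] [CompleteSpace F']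
    (P : DualPairing E E') (Q : DualPairing F F')
    (T : E →L[ℝ] F) (T' : F' →L[ℝ] E')
    (hadj : ∀ (g : F') (x : E), P.toDual (T' g) x = Q.toDual g (T x)) :
    WeakMWeaklyCompact T ↔ WeakStarLWCOperator P T' := by
  have hfun : ∀ v : E, (⨆ y ∈ Metric.closedBall (0 : F') 1, |P.toDual (T' y) v|) = ‖T v‖ := by
    intro v
    simp_rw [hadj]
    exact my_dual_ball_sup Q (T v)
  constructor
  · intro hT x hbdd hun
    unfold WeakStarLWCOperator at *
    simp only [hfun]
    obtain ⟨C, hC⟩ := hbdd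
    set c : ℝ := max C 1 with hcdef
    have hc : 0 < c := lt_of_lt_of_le one_pos (le_max_right _ _)
    have h1 : ∀ n, ‖c⁻¹ • x n‖ ≤ 1 := by
      intro n
      rw [norm_smul, Real.norm_eq_abs, abs_of_pos (inv_pos.mpr hc)]
      calc c⁻¹ * ‖x n‖ ≤ c⁻¹ * c :=
            mul_le_mul_of_nonneg_left ((hC n).trans (le_max_left _ _)) (inv_pos.mpr hc).le
        _ = 1 := inv_mul_cancel₀ hc.ne'
    have h2 : UnNullSeq (fun n => c⁻¹ • x n) := my_unnull_smul (inv_pos.mpr hc) hun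
    have h3 := hT _ h1 h2
    have h4 : Tendsto (fun n => c * ‖T (c⁻¹ • x n)‖) atTop (𝓝 (c * 0)) := h3.const_mul c
    rw [mul_zero] at h4
    refine h4.congr fun n => ?_
    have hx : T (x n) = c • T (c⁻¹ • x n) := by
      rw [← map_smul, smul_smul, mul_inv_cancel₀ hc.ne', one_smul]
    rw [hx, norm_smul, Real.norm_eq_abs, abs_of_pos hc]
  · intro hT x hx1 hun
    have h := hT x ⟨1, hx1⟩ hun
    simp only [hfun] at h
    exact h
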